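/- Let g : Ω → R be α-Hölder and φ : Ω → Ω as above (φ(ω) in the local stable set of ω, with φ depending only on the past), and define g^+(ω) := g(ω) + h(Tω) - h(ω) where h(ω) = Σ_{k=0}^∞ [g(T^k ω) - g(T^k φ(ω))]. Then g^+ is constant on every local stable set: g^+(ω) = g^+(ω') whenever ω_n = ω'_n for all n ≥ 0. -/

import Mathlib

/-- The left shift on the two-sided sequence space. -/
def shiftZ {A : Type*} (ω : ℤ → A) : ℤ → A := fun n => ω (n + 1)

/-- The transfer function `h(ω) = ∑_{k≥0} [g(T^k ω) - g(T^k φ(ω))]`. -/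
noncomputable def transferFun {A : Type*} (g : (ℤ → A) → ℝ) (φ : (ℤ → A) → ℤ → A)
    (ω : ℤ → A) : ℝ :=
  ∑' k : ℕ, (g (shiftZ^[k] ω) - g (shiftZ^[k] (φ ω)))

/-- The reduced function `g⁺(ω) = g(ω) + h(Tω) - h(ω)`. -/
noncomputable def gPlus {A : Type*} (g : (ℤ → A) → ℝ) (φ : (ℤ → A) → ℤ → A)
    (ω : ℤ → A) : ℝ :=
  g ω + transferFun g φ (shiftZ ω) - transferFun g φ ω

lemma shiftZ_iterate {A : Type*} (ω : ℤ → A) (k : ℕ) (n : ℤ) :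
    shiftZ^[k] ω n = ω (n + k) := by
  induction k generalizing ω with
  | zero => simp
  | succ k ih =>
    rw [Function.iterate_succ_apply, ih]
    show ω (n + k + 1) = ω (n + (k + 1 : ℕ))
    congr 1; push_cast; ring

lemma summable_diff_aux {A : Type*}
    (D : (ℤ → A) → (ℤ → A) → ℝ)
    (hD0 : ∀ ω ω' : ℤ → A, (∀ n : ℤ, ω n = ω' n) → D ω ω' = 0)
    (hDe : ∀ (ω ω' : ℤ → A) (N : ℕ), (∀ n : ℤ, |n| < (N : ℤ) → ω n = ω' n) →
      ¬(∀ n : ℤ, |n| < (N : ℤ) + 1 → ω n = ω' n) → D ω ω' = Real.exp (-(N : ℝ)))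
    (g : (ℤ → A) → ℝ) (α C : ℝ) (hα : 0 < α) (hC : 0 ≤ C)
    (hg : ∀ ω ω' : ℤ → A, |g ω - g ω'| ≤ C * (D ω ω') ^ α)
    (ω ω' : ℤ → A) (hst : ∀ n : ℤ, 0 ≤ n → ω n = ω' n) :
    Summable (fun k : ℕ => g (shiftZ^[k] ω) - g (shiftZ^[k] ω')) := by
  classical
  apply Summable.of_norm_bounded (g := fun k => C * (Real.exp (-α)) ^ k)
  · exact (summable_geometric_of_lt_one (Real.exp_pos _).le
      (Real.exp_lt_one_iff.2 (neg_lt_zero.2 hα))).mul_left C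
  · intro k
    set u := shiftZ^[k] ω with hu
    set v := shiftZ^[k] ω' with hv
    have hagree : ∀ n : ℤ, |n| < (k : ℤ) + 1 → u n = v n := by
      intro n hn
      rw [hu, hv, shiftZ_iterate, shiftZ_iterate]
      apply hst
      have := abs_lt.1 hn
      omega
    rw [Real.norm_eq_abs]
    by_cases hall : ∀ n : ℤ, u n = v n
    · have hz : D u v = 0 := hD0 _ _ hall
      calc |g u - g v| ≤ C * (D u v) ^ α := hg u v
        _ = 0 := by rw [hz, Real.zero_rpow hα.ne', mul_zero]
        _ ≤ C * Real.exp (-α) ^ k :=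
          mul_nonneg hC (pow_nonneg (Real.exp_pos _).le k)
    · push_neg at hall
      obtain ⟨n₀, hn₀⟩ := hall
      have hex : ∃ M : ℕ, ¬ ∀ n : ℤ, |n| < (M : ℤ) → u n = v n := by
        refine ⟨n₀.natAbs + 1, fun h => hn₀ (h n₀ ?_)⟩
        push_cast; omega
      set M₀ := Nat.find hex with hM₀def
      have hspec := Nat.find_spec hex
      have hM₀big : k + 2 ≤ M₀ := by
        by_contra hlt
        push_neg at hlt
        refine hspec (fun n hn => hagree n ?_)
        have hle : (M₀ : ℤ) ≤ (k : ℤ) + 1 := by exact_mod_cast Nat.lt_succ_iff.mp hlt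
        rw [abs_lt] at hn ⊢
        omega
      set N := M₀ - 1 with hNdef
      have hPN : ∀ n : ℤ, |n| < (N : ℤ) → u n = v n :=
        not_not.mp (Nat.find_min hex (by omega))
      have hNP : ¬ ∀ n : ℤ, |n| < (N : ℤ) + 1 → u n = v n := by
        have : ((N : ℤ) + 1) = ((M₀ : ℕ) : ℤ) := by push_cast; omega
        rw [this]
        exact hspec
      have hD : D u v = Real.exp (-(N : ℝ)) := hDe u v N hPN hNP
      have hstep : C * (D u v) ^ α ≤ C * Real.exp (-α) ^ k := by
        apply mul_le_mul_of_nonneg_left _ hC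
        rw [hD, ← Real.exp_one_rpow (-(N : ℝ)), ← Real.rpow_natCast (Real.exp (-α)) k,
          ← Real.exp_one_rpow (-α), ← Real.rpow_mul (le_of_lt (Real.exp_pos 1)),
          ← Real.rpow_mul (le_of_lt (Real.exp_pos 1))]
        apply Real.rpow_le_rpow_left_iff (Real.one_lt_exp_iff.mpr one_pos) |>.mpr
        have hNk : (k : ℝ) + 1 ≤ (N : ℝ) := by exact_mod_cast by omega
        nlinarith [hα]
      exact (hg u v).trans hstep

/-- The reduced function `g⁺ = g + h∘T - h` is constant on every local stable set:
`g⁺(ω) = g⁺(ω')` whenever `ω_n = ω'_n` for all `n ≥ 0`. -/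
theorem gPlus_constant_on_stable_sets {A : Type*} [Fintype A]
    (D : (ℤ → A) → (ℤ → A) → ℝ)
    (hDnn : ∀ ω ω', 0 ≤ D ω ω')
    (hD0 : ∀ ω ω' : ℤ → A, (∀ n : ℤ, ω n = ω' n) → D ω ω' = 0)
    (hDe : ∀ (ω ω' : ℤ → A) (N : ℕ), (∀ n : ℤ, |n| < (N : ℤ) → ω n = ω' n) →
      ¬(∀ n : ℤ, |n| < (N : ℤ) + 1 → ω n = ω' n) → D ω ω' = Real.exp (-(N : ℝ)))
    (g : (ℤ → A) → ℝ) (α C : ℝ) (hα : 0 < α) (hC : 0 ≤ C)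
    (hg : ∀ ω ω' : ℤ → A, |g ω - g ω'| ≤ C * (D ω ω') ^ α)
    (φ : (ℤ → A) → ℤ → A)
    (hφstable : ∀ (ω : ℤ → A) (n : ℤ), 0 ≤ n → φ ω n = ω n)
    (hφdep : ∀ ω ω' : ℤ → A, (∀ n : ℤ, 0 ≤ n → ω n = ω' n) → φ ω = φ ω') :
    ∀ ω ω' : ℤ → A, (∀ n : ℤ, 0 ≤ n → ω n = ω' n) →
      gPlus g φ ω = gPlus g φ ω' := by
  intro ω ω' hst
  have summ := summable_diff_aux D hD0 hDe g α C hα hC hg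
  have hφ : φ ω = φ ω' := hφdep _ _ hst
  have hstT : ∀ n : ℤ, 0 ≤ n → shiftZ ω n = shiftZ ω' n := fun n hn => hst (n + 1) (by omega)
  have hφT : φ (shiftZ ω) = φ (shiftZ ω') := hφdep _ _ hstT
  have hstφ : ∀ n : ℤ, 0 ≤ n → ω n = φ ω n := fun n hn => (hφstable ω n hn).symm
  have hstφ' : ∀ n : ℤ, 0 ≤ n → ω' n = φ ω' n := fun n hn => (hφstable ω' n hn).symm
  have hstφT : ∀ n : ℤ, 0 ≤ n → shiftZ ω n = φ (shiftZ ω) n :=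
    fun n hn => (hφstable _ n hn).symm
  have hstφT' : ∀ n : ℤ, 0 ≤ n → shiftZ ω' n = φ (shiftZ ω') n :=
    fun n hn => (hφstable _ n hn).symm
  set a : ℕ → ℝ := fun k => g (shiftZ^[k] ω) - g (shiftZ^[k] ω') with ha
  have sa : Summable a := summ ω ω' hst
  have s1 : Summable (fun k : ℕ => g (shiftZ^[k] ω) - g (shiftZ^[k] (φ ω))) :=
    summ ω (φ ω) hstφ
  have s2 : Summable (fun k : ℕ => g (shiftZ^[k] ω') - g (shiftZ^[k] (φ ω'))) :=
    summ ω' (φ ω') hstφ'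
  have s1T : Summable (fun k : ℕ => g (shiftZ^[k] (shiftZ ω)) - g (shiftZ^[k] (φ (shiftZ ω)))) :=
    summ (shiftZ ω) (φ (shiftZ ω)) hstφT
  have s2T : Summable (fun k : ℕ => g (shiftZ^[k] (shiftZ ω')) - g (shiftZ^[k] (φ (shiftZ ω')))) :=
    summ (shiftZ ω') (φ (shiftZ ω')) hstφT'
  -- h(ω) - h(ω') = ∑ a
  have key1 : transferFun g φ ω - transferFun g φ ω' = ∑' k, a k := by
    unfold transferFun
    rw [← Summable.tsum_sub s1 s2]
    congr 1
    funext k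
    rw [hφ]; ring
  -- h(Tω) - h(Tω') = ∑ a (k+1)
  have key2 : transferFun g φ (shiftZ ω) - transferFun g φ (shiftZ ω')
      = ∑' k : ℕ, a (k + 1) := by
    unfold transferFun
    rw [← Summable.tsum_sub s1T s2T]
    congr 1
    funext k
    rw [hφT, ha]
    simp only [← Function.iterate_succ_apply]
    ring
  have ha0 : a 0 = g ω - g ω' := by simp [ha]
  have hsplit : ∑' k, a k = a 0 + ∑' k : ℕ, a (k + 1) := Summable.tsum_eq_zero_add sa
  unfold gPlus
  linarith [key1, key2, hsplit, ha0]
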